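/- Let Y(t) be an n×n real matrix-valued function of the form Y(t) = Φ(t) · blockDiag(e^{Λt}, 1), where Φ is T-periodic (Φ(t+T) = Φ(t) for all t), Λ is an (n-1)×(n-1) real matrix, and blockDiag(e^{Λt},1) denotes the block-diagonal matrix with upper-left block e^{Λt} and lower-right entry 1. Let P be the projection onto the first n-1 coordinates (P ζ sets the last coordinate to 0). Suppose z₀ : ℝ → ℝⁿ satisfies ⟨Y(θ+T) P ζ̂, z₀(θ)⟩ = ⟨Y(θ) P ζ̂, z₀(θ)⟩ for all θ and all ζ̂, and assume I - e^{ΛT} is invertible. Then ⟨Y(θ) P ζ, z₀(θ)⟩ = 0 for all θ ∈ [0,T] and all ζ ∈ ℝⁿ. -/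

import Mathlib

set_option maxHeartbeats 1000000

open Matrix

theorem stmt0 (m : ℕ) (T : ℝ) (hT : 0 < T)
    (Φ : ℝ → Matrix (Fin m ⊕ Unit) (Fin m ⊕ Unit) ℝ)
    (Λ : Matrix (Fin m) (Fin m) ℝ)
    (hΦ : ∀ t, Φ (t + T) = Φ t)
    (Y : ℝ → Matrix (Fin m ⊕ Unit) (Fin m ⊕ Unit) ℝ)
    (hY : ∀ t, Y t = Φ t * Matrix.fromBlocks (NormedSpace.exp (t • Λ)) 0 0 1)
    (P : (Fin m ⊕ Unit → ℝ) → (Fin m ⊕ Unit → ℝ))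
    (hP : ∀ ζ, P ζ = Sum.elim (fun j => ζ (Sum.inl j)) (fun _ => 0))
    (z₀ : ℝ → Fin m ⊕ Unit → ℝ)
    (hperron : ∀ (θ : ℝ) (ζ : Fin m ⊕ Unit → ℝ),
      (Y (θ + T) *ᵥ P ζ) ⬝ᵥ z₀ θ = (Y θ *ᵥ P ζ) ⬝ᵥ z₀ θ)
    (hinv : IsUnit (1 - NormedSpace.exp (T • Λ))) :
    ∀ θ ∈ Set.Icc (0:ℝ) T, ∀ ζ : Fin m ⊕ Unit → ℝ, (Y θ *ᵥ P ζ) ⬝ᵥ z₀ θ = 0 := by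
  intro θ _ ζ
  set E := NormedSpace.exp (T • Λ) with hE
  -- the linear functional
  set L : (Fin m → ℝ) → ℝ := fun v => (Y θ *ᵥ Sum.elim v (fun _ => 0)) ⬝ᵥ z₀ θ with hL
  -- P of any ζ is Sum.elim of its inl part
  have hPform : ∀ v : Fin m → ℝ, P (Sum.elim v (fun _ => 0)) = Sum.elim v (fun _ => 0) := by
    intro v; rw [hP]; ext x; cases x <;> simp
  -- exp((θ+T)Λ) = exp(θΛ) * exp(TΛ)
  have hexp : NormedSpace.exp ((θ + T) • Λ) = NormedSpace.exp (θ • Λ) * E := by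
    rw [hE, add_smul]
    exact Matrix.exp_add_of_commute _ _ (((Commute.refl Λ).smul_left θ).smul_right T)
  -- block action
  have hblock : ∀ (t : ℝ) (v : Fin m → ℝ),
      (Matrix.fromBlocks (NormedSpace.exp (t • Λ)) 0 0 (1 : Matrix Unit Unit ℝ)) *ᵥ
        Sum.elim v (fun _ => 0) = Sum.elim (NormedSpace.exp (t • Λ) *ᵥ v) (fun _ => 0) := by
    intro t v
    have : (Sum.elim v (fun _ => 0) : Fin m ⊕ Unit → ℝ) = Sum.elim v (0 : Unit → ℝ) := by
      ext x; cases x <;> simp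
    rw [this, Matrix.fromBlocks_mulVec]
    ext x; cases x <;> simp
  have hvec : ∀ (t : ℝ) (v : Fin m → ℝ), Y t *ᵥ Sum.elim v (fun _ => 0)
      = Φ t *ᵥ Sum.elim (NormedSpace.exp (t • Λ) *ᵥ v) (fun _ => 0) := by
    intro t v
    rw [hY, ← Matrix.mulVec_mulVec, hblock]
  -- key: L (E *ᵥ u) = L u
  have hkey : ∀ u : Fin m → ℝ, L (E *ᵥ u) = L u := by
    intro u
    have h := hperron θ (Sum.elim u (fun _ => 0))
    rw [hPform] at h
    show (Y θ *ᵥ Sum.elim (E *ᵥ u) fun _ => 0) ⬝ᵥ z₀ θ = (Y θ *ᵥ Sum.elim u fun _ => 0) ⬝ᵥ z₀ θ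
    rw [← h, hvec (θ + T) u, hvec θ (E *ᵥ u), hΦ, hexp, ← Matrix.mulVec_mulVec]
  -- L is linear enough: L ((1-E) *ᵥ u) = 0
  have hsub : ∀ u : Fin m → ℝ, L ((1 - E) *ᵥ u) = 0 := by
    intro u
    have h1 : (1 - E) *ᵥ u = u - E *ᵥ u := by
      rw [Matrix.sub_mulVec, Matrix.one_mulVec]
    have h2 : (Sum.elim (u - E *ᵥ u) (fun _ => 0) : Fin m ⊕ Unit → ℝ)
        = Sum.elim u (fun _ => 0) - Sum.elim (E *ᵥ u) (fun _ => 0) := by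
      ext x; cases x <;> simp
    rw [h1, hL]
    simp only []
    rw [h2, Matrix.mulVec_sub, sub_dotProduct]
    have := hkey u
    rw [hL] at this
    simp only [] at this
    rw [this]; ring
  -- surjectivity of 1 - E
  have hLzero : ∀ v : Fin m → ℝ, L v = 0 := by
    intro v
    have hu : (1 - E) *ᵥ ((↑hinv.unit⁻¹ : Matrix (Fin m) (Fin m) ℝ) *ᵥ v) = v := by
      rw [Matrix.mulVec_mulVec]
      have : (1 - E) * (↑hinv.unit⁻¹ : Matrix (Fin m) (Fin m) ℝ) = 1 := by
        have := hinv.unit.mul_inv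
        rwa [IsUnit.unit_spec] at this
      rw [this, Matrix.one_mulVec]
    rw [← hu]
    exact hsub _
  have : P ζ = Sum.elim (fun j => ζ (Sum.inl j)) (fun _ => 0) := hP ζ
  rw [this]
  exact hLzero (fun j => ζ (Sum.inl j))
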